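/- Let k(x,y) = γ(x)|y−x|^{−α(x)−d} be a stable-like kernel with 0 < α̲ ≤ α(x) ≤ ᾱ < 2 and γ bounded by γ̄, and let C^{n,p} be its cube discretization with cutoff parameter p ∈ (0,1], 1/p ≥ ᾱ. Then for all x ∈ ℝ^d and y ∈ B_1(0) with |[y]_n| > 2√d/n^p, n^d C^{n,p}([x]_n, [x]_n + [y]_n) ≤ γ̄ · 2^{ᾱ+d+1} · d^{d/2} · V_d · |y|^{−ᾱ−d}, where V_d is the volume of the unit ball and [·]_n denotes rounding to the nearest point of (1/n)ℤ^d. -/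

import Mathlib

open MeasureTheory Filter Topology
open scoped ENNReal NNReal Pointwise

noncomputable section

abbrev Eucl (d : ℕ) := EuclideanSpace ℝ (Fin d)

/-- The point of `ℝ^d` corresponding to the lattice point `a/n`, `a ∈ ℤ^d`. -/
def latticePt (d n : ℕ) (a : Fin d → ℤ) : Eucl d := WithLp.toLp 2 (fun i => (a i : ℝ) / n)

/-- The half-open cube of side `1/n` centred at the lattice point `a/n`. -/
def cube (d n : ℕ) (a : Fin d → ℤ) : Set (Eucl d) :=
  {x | ∀ i, (a i : ℝ)/n - 1/(2*n) ≤ x i ∧ x i < (a i : ℝ)/n + 1/(2*n)}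

/-- `[x]_n`: the index of the lattice point of `(1/n)ℤ^d` nearest to `x`. -/
def lattOf (d n : ℕ) (x : Eucl d) : Fin d → ℤ := fun i => ⌊n * x i + 1/2⌋

/-- The discretised conductances `C^{n,p}(a,b) = n^d ∫_{ā}∫_{b̄} k(x,y) dx dy` for
`|a−b| > 2√d/n^p` and `0` otherwise. -/
def Cnp (d n : ℕ) (p : ℝ) (k : Eucl d → Eucl d → ℝ) (a b : Fin d → ℤ) : ℝ :=
  if ‖latticePt d n a - latticePt d n b‖ > 2 * Real.sqrt d / (n : ℝ) ^ p then
    (n : ℝ) ^ d * ∫ x in cube d n a, ∫ y in cube d n b, k x y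
  else 0

/-- A half-open box in Euclidean space, as preimage of a pi set. -/
lemma box_eq (d : ℕ) (l u : Fin d → ℝ) :
    {x : Eucl d | ∀ i, l i ≤ x i ∧ x i < u i} =
      (MeasurableEquiv.toLp 2 (Fin d → ℝ)).symm ⁻¹' (Set.univ.pi fun i => Set.Ico (l i) (u i)) := by
  ext x
  simp [Set.mem_pi, Set.mem_Ico, MeasurableEquiv.coe_toLp_symm]

lemma measurableSet_box (d : ℕ) (l u : Fin d → ℝ) :
    MeasurableSet {x : Eucl d | ∀ i, l i ≤ x i ∧ x i < u i} := by
  rw [box_eq]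
  exact (MeasurableEquiv.toLp 2 (Fin d → ℝ)).symm.measurable
    (MeasurableSet.univ_pi fun i => measurableSet_Ico)

lemma volume_box (d : ℕ) (l u : Fin d → ℝ) :
    volume {x : Eucl d | ∀ i, l i ≤ x i ∧ x i < u i} = ∏ i, ENNReal.ofReal (u i - l i) := by
  rw [box_eq, (EuclideanSpace.volume_preserving_symm_measurableEquiv_toLp (Fin d)).measure_preimage
    (MeasurableSet.univ_pi fun i => measurableSet_Ico).nullMeasurableSet, volume_pi_pi]
  simp [Real.volume_Ico]

lemma cube_eq_box (d n : ℕ) (a : Fin d → ℤ) :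
    cube d n a = {x : Eucl d | ∀ i, ((a i : ℝ)/n - 1/(2*n)) ≤ x i ∧ x i < ((a i : ℝ)/n + 1/(2*n))} :=
  rfl

lemma measurableSet_cube (d n : ℕ) (a : Fin d → ℤ) : MeasurableSet (cube d n a) := by
  rw [cube_eq_box]; exact measurableSet_box _ _ _

lemma volume_cube (d n : ℕ) (a : Fin d → ℤ) :
    volume (cube d n a) = ENNReal.ofReal (1/(n:ℝ)) ^ d := by
  rw [cube_eq_box, volume_box]
  have h : ∀ i : Fin d, ((a i : ℝ)/n + 1/(2*n)) - ((a i : ℝ)/n - 1/(2*n)) = 1/(n:ℝ) := by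
    intro i; ring
  calc ∏ i, ENNReal.ofReal (((a i : ℝ)/n + 1/(2*n)) - ((a i : ℝ)/n - 1/(2*n)))
      = ∏ _i : Fin d, ENNReal.ofReal (1/(n:ℝ)) := Finset.prod_congr rfl (fun i _ => by rw [h i])
    _ = ENNReal.ofReal (1/(n:ℝ)) ^ d := by simp

lemma norm_le_of_coord_bound {d : ℕ} (x : Eucl d) (c : ℝ) (hc : 0 ≤ c) (h : ∀ i, |x i| ≤ c) :
    ‖x‖ ≤ Real.sqrt d * c := by
  rw [EuclideanSpace.norm_eq]
  have h1 : ∑ i, ‖x i‖ ^ 2 ≤ (d : ℝ) * c ^ 2 := by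
    calc ∑ i, ‖x i‖ ^ 2 ≤ ∑ _i : Fin d, c ^ 2 := by
          refine Finset.sum_le_sum fun i _ => ?_
          rw [Real.norm_eq_abs]
          exact pow_le_pow_left₀ (abs_nonneg _) (h i) 2
      _ = (d : ℝ) * c ^ 2 := by simp [mul_comm]
  calc Real.sqrt (∑ i, ‖x i‖ ^ 2) ≤ Real.sqrt ((d : ℝ) * c ^ 2) := Real.sqrt_le_sqrt h1
    _ = Real.sqrt d * c := by
        rw [Real.sqrt_mul (Nat.cast_nonneg d), Real.sqrt_sq hc]

lemma dist_le_of_mem_cube {d n : ℕ} (hn : 0 < n) {a : Fin d → ℤ} {w : Eucl d}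
    (hw : w ∈ cube d n a) : ‖w - latticePt d n a‖ ≤ Real.sqrt d / (2 * n) := by
  have hn' : (0:ℝ) < n := by exact_mod_cast hn
  have hc : (0:ℝ) ≤ 1/(2*n) := by positivity
  have := norm_le_of_coord_bound (w - latticePt d n a) (1/(2*(n:ℝ))) hc ?_
  · calc ‖w - latticePt d n a‖ ≤ Real.sqrt d * (1/(2*n)) := this
      _ = Real.sqrt d / (2 * n) := by ring
  · intro i
    have h1 := (hw i).1
    have h2 := (hw i).2
    have hsub : (w - latticePt d n a) i = w i - (a i : ℝ)/n := by
      simp [latticePt, PiLp.sub_apply]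
    rw [hsub, abs_le]
    constructor <;> [linarith; linarith]

lemma mem_cube_lattOf {d : ℕ} {n : ℕ} (hn : 0 < n) (y : Eucl d) : y ∈ cube d n (lattOf d n y) := by
  intro i
  have hn' : (0:ℝ) < n := by exact_mod_cast hn
  have h1 : ((⌊(n:ℝ) * y i + 1/2⌋ : ℤ) : ℝ) ≤ (n:ℝ) * y i + 1/2 := Int.floor_le _
  have h2 : (n:ℝ) * y i + 1/2 < ((⌊(n:ℝ) * y i + 1/2⌋ : ℤ) : ℝ) + 1 := Int.lt_floor_add_one _
  simp only [lattOf]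
  have h3 : (n:ℝ) * (1/(2*(n:ℝ))) = 1/2 := by field_simp
  have h4 : (1/(2*(n:ℝ))) * (n:ℝ) = 1/2 := by field_simp
  constructor
  · rw [div_sub' hn'.ne', div_le_iff₀ hn']
    nlinarith [h1, h2, h3, h4]
  · rw [div_add' _ _ _ hn'.ne', lt_div_iff₀ hn']
    nlinarith [h1, h2, h3, h4]

lemma latticePt_add (d n : ℕ) (a b : Fin d → ℤ) :
    latticePt d n (a + b) = latticePt d n a + latticePt d n b := by
  ext i
  simp [latticePt, PiLp.add_apply, add_div]

set_option maxHeartbeats 1600000 in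
/-- For the stable-like kernel `k(x,y) = γ(x)|y−x|^{−α(x)−d}` with
`0 < α̲ ≤ α ≤ ᾱ < 2`, `0 ≤ γ ≤ γ̄` and cutoff parameter `p` with `1/p ≥ ᾱ`, one has
`n^d C^{n,p}([x]_n, [x]_n + [y]_n) ≤ γ̄ 2^{ᾱ+d+1} d^{d/2} V_d |y|^{−ᾱ−d}`
for `y ∈ B₁(0)` with `|[y]_n| > 2√d/n^p`. -/
theorem stable_like_discretization_bound (d n : ℕ) (hn : 0 < n)
    (p : ℝ) (hp : 0 < p) (hp1 : p ≤ 1)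
    (αl αu : ℝ) (hαl : 0 < αl) (hαu : αu < 2) (hpα : αu ≤ 1 / p)
    (α : Eucl d → ℝ) (hα : ∀ x, αl ≤ α x ∧ α x ≤ αu)
    (γ : Eucl d → ℝ) (γbar : ℝ) (hγ : ∀ x, 0 ≤ γ x ∧ γ x ≤ γbar)
    (k : Eucl d → Eucl d → ℝ)
    (hk : ∀ x y, k x y = γ x * ‖y - x‖ ^ (-(α x) - d))
    (x y : Eucl d) (hy : y ∈ Metric.ball (0 : Eucl d) 1)
    (hcut : ‖latticePt d n (lattOf d n y)‖ > 2 * Real.sqrt d / (n : ℝ) ^ p) :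
    (n : ℝ) ^ d * Cnp d n p k (lattOf d n x) (lattOf d n x + lattOf d n y) ≤
      γbar * 2 ^ (αu + d + 1) * (d : ℝ) ^ ((d : ℝ) / 2) *
        (volume (Metric.ball (0 : Eucl d) 1)).toReal * ‖y‖ ^ (-αu - d) := by
  rcases Nat.eq_zero_or_pos d with hd0 | hd0
  · exfalso
    subst hd0
    have h0 : ‖latticePt 0 n (lattOf 0 n y)‖ = 0 := by
      simp [EuclideanSpace.norm_eq]
    rw [h0] at hcut
    simp at hcut
  have hn' : (0:ℝ) < n := by exact_mod_cast hn
  have hn1 : (1:ℝ) ≤ n := by exact_mod_cast hn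
  have hd' : (0:ℝ) < Real.sqrt d := Real.sqrt_pos.2 (by exact_mod_cast hd0)
  have hαu0 : 0 < αu := lt_of_lt_of_le hαl (le_trans (hα 0).1 (hα 0).2)
  set a := lattOf d n x with ha
  set b := lattOf d n x + lattOf d n y with hb
  set z := latticePt d n (lattOf d n y) with hzdef
  have hzb : latticePt d n b = latticePt d n a + z := by
    rw [hb, latticePt_add]
  have hnp : (n:ℝ) ^ p ≤ (n:ℝ) := by
    calc (n:ℝ)^p ≤ (n:ℝ)^(1:ℝ) := Real.rpow_le_rpow_of_exponent_le hn1 hp1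
    _ = n := Real.rpow_one _
  have hnp0 : (0:ℝ) < (n:ℝ)^p := Real.rpow_pos_of_pos hn' p
  have hz : 2 * Real.sqrt d / n < ‖z‖ := by
    refine lt_of_le_of_lt ?_ hcut
    exact div_le_div_of_nonneg_left (by positivity) hnp0 hnp
  have hz0 : 0 < ‖z‖ := lt_trans (by positivity) hz
  have hyz : ‖y - z‖ ≤ Real.sqrt d / (2*n) := dist_le_of_mem_cube hn (mem_cube_lattOf hn y)
  have hzy : Real.sqrt d / (2*n) ≤ ‖z‖ / 4 := by
    have h4 : Real.sqrt d / (2*(n:ℝ)) = (2 * Real.sqrt d / n)/4 := by ring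
    rw [h4]; linarith
  have hyn : ‖y‖ ≤ (5/4) * ‖z‖ := by
    have h5 : ‖y‖ ≤ ‖z‖ + ‖y - z‖ := by
      calc ‖y‖ = ‖z + (y - z)‖ := by rw [add_sub_cancel]
        _ ≤ ‖z‖ + ‖y - z‖ := norm_add_le _ _
    linarith
  have hy0 : 0 < ‖y‖ := by
    have h5 : ‖z‖ - ‖y‖ ≤ ‖y - z‖ := by
      calc ‖z‖ - ‖y‖ ≤ ‖z - y‖ := norm_sub_norm_le _ _
        _ = ‖y - z‖ := norm_sub_rev _ _
    linarith
  have hy1 : ‖y‖ < 1 := by simpa using mem_ball_zero_iff.1 hy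
  have hkey : ∀ x' ∈ cube d n a, ∀ y' ∈ cube d n b, 2/5 * ‖y‖ ≤ ‖y' - x'‖ := by
    intro x' hx' y' hy'
    have h1 : ‖x' - latticePt d n a‖ ≤ Real.sqrt d / (2*n) := dist_le_of_mem_cube hn hx'
    have h2 : ‖y' - latticePt d n b‖ ≤ Real.sqrt d / (2*n) := dist_le_of_mem_cube hn hy'
    have h3 : ‖y' - x' - z‖ ≤ Real.sqrt d / n := by
      have heq : y' - x' - z = (y' - latticePt d n b) - (x' - latticePt d n a) := by
        rw [hzb]; abel
      rw [heq]
      calc ‖(y' - latticePt d n b) - (x' - latticePt d n a)‖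
          ≤ ‖y' - latticePt d n b‖ + ‖x' - latticePt d n a‖ := norm_sub_le _ _
        _ ≤ Real.sqrt d/(2*n) + Real.sqrt d/(2*n) := add_le_add h2 h1
        _ = Real.sqrt d / n := by ring
    have h6 : ‖z‖ - ‖y' - x'‖ ≤ Real.sqrt d / n := by
      calc ‖z‖ - ‖y' - x'‖ ≤ ‖z - (y' - x')‖ := norm_sub_norm_le _ _
        _ = ‖y' - x' - z‖ := norm_sub_rev _ _
        _ ≤ _ := h3
    have h7 : Real.sqrt d / n ≤ ‖z‖ / 2 := by
      have heq : Real.sqrt d / (n:ℝ) = (2*Real.sqrt d/n)/2 := by ring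
      rw [heq]; linarith
    linarith
  have hγ0 : 0 ≤ γbar := le_trans (hγ 0).1 (hγ 0).2
  set t : ℝ := 2/5 * ‖y‖ with ht
  have ht0 : 0 < t := by positivity
  have ht1 : t ≤ 1 := by rw [ht]; linarith
  set M : ℝ := γbar * t ^ (-αu - (d:ℝ)) with hM
  have hbound : ∀ x' ∈ cube d n a, ∀ y' ∈ cube d n b, ‖k x' y'‖ ≤ M := by
    intro x' hx' y' hy'
    have hr := hkey x' hx' y' hy'
    have hk0 : 0 ≤ k x' y' := by
      rw [hk]; exact mul_nonneg (hγ x').1 (Real.rpow_nonneg (norm_nonneg _) _)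
    rw [Real.norm_eq_abs, abs_of_nonneg hk0, hk, hM]
    have step1 : ‖y' - x'‖ ^ (-(α x') - (d:ℝ)) ≤ t ^ (-(α x') - (d:ℝ)) :=
      Real.rpow_le_rpow_of_nonpos ht0 hr
        (by have := (hα x').1; have : (0:ℝ) ≤ d := Nat.cast_nonneg d; linarith [(hα x').1])
    have step2 : t ^ (-(α x') - (d:ℝ)) ≤ t ^ (-αu - (d:ℝ)) :=
      Real.rpow_le_rpow_of_exponent_ge ht0 ht1 (by linarith [(hα x').2])
    exact mul_le_mul (hγ x').2 (le_trans step1 step2)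
      (Real.rpow_nonneg (norm_nonneg _) _) hγ0
  have hM0 : 0 ≤ M := mul_nonneg hγ0 (Real.rpow_nonneg ht0.le _)
  have hvlt : ∀ c : Fin d → ℤ, volume (cube d n c) < ⊤ := by
    intro c; rw [volume_cube]
    exact ENNReal.pow_lt_top ENNReal.ofReal_lt_top
  have hvtoReal : ∀ c : Fin d → ℤ, (volume (cube d n c)).toReal = (1/(n:ℝ))^d := by
    intro c; rw [volume_cube, ENNReal.toReal_pow, ENNReal.toReal_ofReal (by positivity)]
  have hinner : ∀ x' ∈ cube d n a, ‖∫ y' in cube d n b, k x' y'‖ ≤ M * (1/(n:ℝ))^d := by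
    intro x' hx'
    have h := norm_setIntegral_le_of_norm_le_const (hvlt b)
      (fun y' hy' => hbound x' hx' y' hy')
    rwa [measureReal_def, hvtoReal b] at h
  have houter : ‖∫ x' in cube d n a, ∫ y' in cube d n b, k x' y'‖
      ≤ (M * (1/(n:ℝ))^d) * (1/(n:ℝ))^d := by
    have h := norm_setIntegral_le_of_norm_le_const (hvlt a) hinner
    rwa [measureReal_def, hvtoReal a] at h
  have hcond : ‖latticePt d n a - latticePt d n b‖ > 2 * Real.sqrt d / (n:ℝ)^p := by
    have heq : latticePt d n a - latticePt d n b = -z := by rw [hzb]; abel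
    rw [heq, norm_neg]; exact hcut
  have hfin : (n : ℝ) ^ d * Cnp d n p k a b ≤ M := by
    unfold Cnp
    rw [if_pos hcond]
    have hI : (∫ x' in cube d n a, ∫ y' in cube d n b, k x' y')
        ≤ (M * (1/(n:ℝ))^d) * (1/(n:ℝ))^d :=
      le_trans (le_abs_self _) (by rwa [← Real.norm_eq_abs])
    have hnd : (0:ℝ) ≤ (n:ℝ)^d := by positivity
    calc (n:ℝ)^d * ((n:ℝ)^d * ∫ x' in cube d n a, ∫ y' in cube d n b, k x' y')
        ≤ (n:ℝ)^d * ((n:ℝ)^d * ((M * (1/(n:ℝ))^d) * (1/(n:ℝ))^d)) :=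
          mul_le_mul_of_nonneg_left (mul_le_mul_of_nonneg_left hI hnd) hnd
      _ = M * ((n:ℝ)*(1/(n:ℝ)))^d * ((n:ℝ)*(1/(n:ℝ)))^d := by ring
      _ = M := by rw [show (n:ℝ)*(1/(n:ℝ)) = 1 by field_simp]; simp
  refine le_trans hfin ?_
  set V := (volume (Metric.ball (0:Eucl d) 1)).toReal with hV
  have hball : {w : Eucl d | ∀ i, (-(7/8):ℝ) ≤ w i ∧ w i < 7/8}
      ⊆ Metric.ball (0:Eucl d) (Real.sqrt d) := by
    intro w hw
    rw [Metric.mem_ball, dist_zero_right]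
    have hb : ‖w‖ ≤ Real.sqrt d * (7/8) :=
      norm_le_of_coord_bound w (7/8) (by norm_num)
        (fun i => abs_le.2 ⟨by linarith [(hw i).1], by linarith [(hw i).2]⟩)
    nlinarith
  have hVd : ((7:ℝ)/4)^d ≤ (d:ℝ) ^ ((d:ℝ)/2) * V := by
    have h1 : volume {w : Eucl d | ∀ i, (-(7/8):ℝ) ≤ w i ∧ w i < 7/8}
        = ENNReal.ofReal (7/4) ^ d := by
      rw [volume_box]; norm_num
    haveI : Nonempty (Fin d) := ⟨⟨0, hd0⟩⟩
    haveI : Nontrivial (Eucl d) := by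
      refine nontrivial_of_ne (EuclideanSpace.single ⟨0, hd0⟩ (1:ℝ)) 0 (fun h => ?_)
      have h' : (1:ℝ) = 0 := by
        have hc := congrArg (fun v : Eucl d => v ⟨0, hd0⟩) h
        simpa [EuclideanSpace.single_apply] using hc
      exact one_ne_zero h'
    have h2 : volume (Metric.ball (0:Eucl d) (Real.sqrt d)) =
        ENNReal.ofReal (Real.sqrt d ^ d) * volume (Metric.ball (0:Eucl d) 1) := by
      rw [Measure.addHaar_ball volume _ (Real.sqrt_nonneg _), finrank_euclideanSpace_fin]
    have h3 : volume {w : Eucl d | ∀ i, (-(7/8):ℝ) ≤ w i ∧ w i < 7/8}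
        ≤ volume (Metric.ball (0:Eucl d) (Real.sqrt d)) := measure_mono hball
    rw [h1, h2] at h3
    have hfin2 : ENNReal.ofReal (Real.sqrt d ^ d) * volume (Metric.ball (0:Eucl d) 1) ≠ ⊤ :=
      ENNReal.mul_ne_top ENNReal.ofReal_ne_top measure_ball_lt_top.ne
    have h5 := ENNReal.toReal_mono hfin2 h3
    rw [ENNReal.toReal_pow, ENNReal.toReal_ofReal (by norm_num),
      ENNReal.toReal_mul, ENNReal.toReal_ofReal (by positivity)] at h5
    have h4 : (Real.sqrt d)^d = (d:ℝ) ^ ((d:ℝ)/2) := by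
      rw [Real.sqrt_eq_rpow, ← Real.rpow_natCast ((d:ℝ) ^ ((1:ℝ)/2)) d,
        ← Real.rpow_mul (Nat.cast_nonneg d)]
      congr 1; ring
    rw [h4] at h5
    exact h5
  have hsplit : t ^ (-αu - (d:ℝ)) = (5/2:ℝ) ^ (αu + (d:ℝ)) * ‖y‖ ^ (-αu - (d:ℝ)) := by
    rw [ht, Real.mul_rpow (by norm_num) (norm_nonneg y)]
    congr 1
    rw [show (-αu - (d:ℝ)) = -(αu + d) by ring,
      Real.rpow_neg (by norm_num : (0:ℝ) ≤ 2/5),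
      ← Real.inv_rpow (by norm_num : (0:ℝ) ≤ 2/5)]
    norm_num
  have hfinal : (5/2:ℝ) ^ (αu + (d:ℝ)) ≤ 2 ^ (αu + (d:ℝ) + 1) * ((d:ℝ)^((d:ℝ)/2) * V) := by
    have hstep : (5/4:ℝ)^((d:ℝ)+2) ≤ 2 * (7/4:ℝ)^d := by
      rw [Real.rpow_add (by norm_num) (d:ℝ) 2, Real.rpow_natCast]
      have ha1 : (5/4:ℝ)^d ≤ (7/4:ℝ)^d := pow_le_pow_left₀ (by norm_num) (by norm_num) d
      have ha2 : (5/4:ℝ)^(2:ℝ) ≤ 2 := by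
        rw [show (2:ℝ) = ((2:ℕ):ℝ) by norm_num, Real.rpow_natCast]; norm_num
      have hb1 : (0:ℝ) ≤ (5/4:ℝ)^d := by positivity
      nlinarith
    have hsp : (5/2:ℝ)^(αu+(d:ℝ)) = 2^(αu+(d:ℝ)) * (5/4:ℝ)^(αu+(d:ℝ)) := by
      rw [show (5/2:ℝ) = 2 * (5/4) by norm_num,
        Real.mul_rpow (by norm_num) (by norm_num)]
    calc (5/2:ℝ)^(αu+(d:ℝ)) = 2^(αu+(d:ℝ)) * (5/4:ℝ)^(αu+(d:ℝ)) := hsp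
      _ ≤ 2^(αu+(d:ℝ)) * (5/4:ℝ)^((d:ℝ)+2) :=
        mul_le_mul_of_nonneg_left
          (Real.rpow_le_rpow_of_exponent_le (by norm_num) (by linarith)) (by positivity)
      _ ≤ 2^(αu+(d:ℝ)) * (2 * (7/4:ℝ)^d) :=
        mul_le_mul_of_nonneg_left hstep (by positivity)
      _ = 2^(αu+(d:ℝ)+1) * (7/4:ℝ)^d := by
        rw [Real.rpow_add (by norm_num) (αu+(d:ℝ)) 1, Real.rpow_one]; ring
      _ ≤ 2^(αu+(d:ℝ)+1) * ((d:ℝ)^((d:ℝ)/2) * V) :=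
        mul_le_mul_of_nonneg_left hVd (by positivity)
  rw [hM, hsplit]
  calc γbar * ((5/2:ℝ)^(αu+(d:ℝ)) * ‖y‖ ^ (-αu - (d:ℝ)))
      ≤ γbar * ((2^(αu+(d:ℝ)+1) * ((d:ℝ)^((d:ℝ)/2) * V)) * ‖y‖ ^ (-αu - (d:ℝ))) := by
        have hyn0 : (0:ℝ) ≤ ‖y‖ ^ (-αu - (d:ℝ)) := Real.rpow_nonneg (norm_nonneg _) _
        have := mul_le_mul_of_nonneg_right hfinal hyn0
        exact mul_le_mul_of_nonneg_left this hγ0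
    _ = γbar * 2 ^ (αu + (d:ℝ) + 1) * (d : ℝ) ^ ((d : ℝ) / 2) * V * ‖y‖ ^ (-αu - (d:ℝ)) := by
        ring
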